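/- Let A₀ = e₃ ⊗ (e₁ + i e₂)ᵀ ∈ gl(3,ℂ) and let Orb(A₀) = {e^{iφ} R₁ A₀ R₂⁻¹ : φ ∈ ℝ, R₁, R₂ ∈ SO(3)} be its orbit under the action (e^{iφ}, R₁, R₂) · A = e^{iφ} R₁ A R₂⁻¹ of U(1) × SO(3) × SO(3). Let ℤ₂ = {±1} act on SO(3) × S² by (−1)·(A, x) = (A J̃₋, −x), where J̃₋ = diag(−1,−1,1). Then the map sending the ℤ₂-orbit of (A, x) to the matrix x ⊗ (A₁ + i A₂)ᵀ, where A₁, A₂ denote the first and second columns of A, is a well-defined bijection from (SO(3) × S²)/ℤ₂ onto Orb(A₀). -/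

import Mathlib

open Matrix

noncomputable section

abbrev M3R : Type := Matrix (Fin 3) (Fin 3) ℝ
abbrev M3C : Type := Matrix (Fin 3) (Fin 3) ℂ

def isSO3 (R : M3R) : Prop := R * Rᵀ = 1 ∧ R.det = 1

def toC (R : M3R) : M3C := R.map (fun x => (x : ℂ))

/-- `J̃₋ = diag(-1,-1,1)`. -/
def Jtm : M3R := !![-1, 0, 0; 0, -1, 0; 0, 0, 1]

/-- `A₀ = e₃ ⊗ (e₁ + i e₂)ᵀ`. -/
def A0 : M3C := !![0, 0, 0; 0, 0, 0; 1, Complex.I, 0]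

/-- The orbit of `A₀` under the `U(1) × SO(3) × SO(3)` action
`(e^{iφ}, R₁, R₂) · A = e^{iφ} R₁ A R₂⁻¹`. -/
def OrbA0 : Set M3C :=
  {A | ∃ (φ : ℝ) (R₁ R₂ : M3R), isSO3 R₁ ∧ isSO3 R₂ ∧
    A = Complex.exp (φ * Complex.I) • (toC R₁ * A0 * (toC R₂)⁻¹)}

/-- `SO(3) × S²`, as a subtype of `M3R × (Fin 3 → ℝ)`. -/
abbrev SOS : Type := {p : M3R × (Fin 3 → ℝ) // isSO3 p.1 ∧ p.2 ⬝ᵥ p.2 = 1}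

/-- The `ℤ₂ = {±1}`-orbit relation on `SO(3) × S²`, where `(-1)·(A, x) = (A J̃₋, -x)`. -/
def z2Rel (p p' : SOS) : Prop :=
  p'.val = p.val ∨ p'.val = (p.val.1 * Jtm, -p.val.2)

/-! ### Auxiliary lemmas -/

lemma isSO3.tmul {R : M3R} (h : isSO3 R) : Rᵀ * R = 1 :=
  mul_eq_one_comm.mp h.1

lemma isSO3.mul {R S : M3R} (hR : isSO3 R) (hS : isSO3 S) : isSO3 (R * S) := by
  constructor
  · rw [Matrix.transpose_mul, mul_assoc, ← mul_assoc S, hS.1, one_mul, hR.1]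
  · rw [Matrix.det_mul, hR.2, hS.2, one_mul]

lemma toC_mul (R S : M3R) : toC (R * S) = toC R * toC S := by
  ext i j
  simp [toC, Matrix.mul_apply]

lemma toC_one : toC 1 = 1 := by
  ext i j
  simp [toC, Matrix.one_apply, apply_ite]

lemma toC_inv {R : M3R} (h : isSO3 R) : (toC R)⁻¹ = toC Rᵀ := by
  apply Matrix.inv_eq_right_inv
  rw [← toC_mul, h.1, toC_one]

/-- The value of the map. -/
def gval (A : M3R) (x : Fin 3 → ℝ) : M3C :=
  Matrix.vecMulVec (fun i => (x i : ℂ))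
    (fun q => (A q 0 : ℂ) + Complex.I * (A q 1 : ℂ))

def fval (p : SOS) : M3C := gval p.val.1 p.val.2

/-- Rigidity: an SO(3) matrix is determined by its first two columns up to the claimed sign. -/
lemma so3_rigid {A A' : M3R} (hA : isSO3 A) (hA' : isSO3 A') (ε : ℝ) (hε : ε * ε = 1)
    (h0 : ∀ q, A' q 0 = ε * A q 0) (h1 : ∀ q, A' q 1 = ε * A q 1) :
    A' = A * !![ε, 0, 0; 0, ε, 0; 0, 0, 1] := by
  have hεne : ε ≠ 0 := by rintro rfl; simpa using hε
  have hAt : Aᵀ * A = 1 := hA.tmul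
  have hA't : A'ᵀ * A' = 1 := hA'.tmul
  set D : M3R := Aᵀ * A' with hD
  have hA'eq : A' = A * D := by
    rw [hD, ← mul_assoc, hA.1, one_mul]
  have dc0 : ∀ k, D k 0 = ε * (Aᵀ * A) k 0 := by
    intro k
    simp [hD, Matrix.mul_apply, Fin.sum_univ_three, h0]
    ring
  have dc1 : ∀ k, D k 1 = ε * (Aᵀ * A) k 1 := by
    intro k
    simp [hD, Matrix.mul_apply, Fin.sum_univ_three, h1]
    ring
  rw [hAt] at dc0 dc1
  have d00 : D 0 0 = ε := by simpa [Matrix.one_apply] using dc0 0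
  have d10 : D 1 0 = 0 := by simpa [Matrix.one_apply] using dc0 1
  have d20 : D 2 0 = 0 := by simpa [Matrix.one_apply] using dc0 2
  have d01 : D 0 1 = 0 := by simpa [Matrix.one_apply] using dc1 0
  have d11 : D 1 1 = ε := by simpa [Matrix.one_apply] using dc1 1
  have d21 : D 2 1 = 0 := by simpa [Matrix.one_apply] using dc1 2
  have hDt : Dᵀ * D = 1 := by
    have : Dᵀ * D = A'ᵀ * (A * Aᵀ) * A' := by
      rw [hD, Matrix.transpose_mul, Matrix.transpose_transpose]
      noncomm_ring
    rw [this, hA.1, mul_one, hA't]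
  have e02 : (Dᵀ * D) 0 2 = (1 : M3R) 0 2 := by rw [hDt]
  have e12 : (Dᵀ * D) 1 2 = (1 : M3R) 1 2 := by rw [hDt]
  simp [Matrix.mul_apply, Fin.sum_univ_three, d00, d10, d20, d01, d11, d21, hεne] at e02 e12
  have hdet : D.det = 1 := by
    rw [hD, Matrix.det_mul, Matrix.det_transpose, hA.2, hA'.2, one_mul]
  rw [Matrix.det_fin_three] at hdet
  rw [d00, d10, d20, d01, d11, d21, e02, e12] at hdet
  have d22 : D 2 2 = 1 := by nlinarith [hdet, hε]
  have : D = !![ε, 0, 0; 0, ε, 0; 0, 0, 1] := by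
    ext i j
    fin_cases i <;> fin_cases j <;>
      simp [d00, d10, d20, d01, d11, d21, e02, e12, d22, Matrix.vecHead, Matrix.vecTail]
  rw [hA'eq, this]

lemma id3 : !![(1:ℝ), 0, 0; 0, 1, 0; 0, 0, 1] = (1 : M3R) := by
  ext i j
  fin_cases i <;> fin_cases j <;>
    simp [Matrix.one_apply, Matrix.vecHead, Matrix.vecTail]

lemma neg13 : !![(-1:ℝ), 0, 0; 0, -1, 0; 0, 0, 1] = Jtm := rfl

/-- Existence of a special orthogonal matrix with prescribed third column. -/
lemma exists_so3_col2 (x : Fin 3 → ℝ) (hx : x ⬝ᵥ x = 1) :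
    ∃ R : M3R, isSO3 R ∧ ∀ i, R i 2 = x i := by
  -- orthonormal basis extension
  have hx' : ∑ i, x i * x i = 1 := hx
  set y : EuclideanSpace ℝ (Fin 3) := WithLp.toLp 2 x with hy
  have hon : Orthonormal ℝ (({2} : Set (Fin 3)).restrict
      (fun _ : Fin 3 => y)) := by
    rw [orthonormal_iff_ite]
    rintro ⟨i, hi⟩ ⟨j, hj⟩
    simp only [Set.mem_singleton_iff] at hi hj
    subst hi; subst hj
    change inner ℝ y y = _
    simp [PiLp.inner_apply, RCLike.inner_apply, hy, hx', EuclideanSpace.norm_eq, pow_two, Set.restrict_apply]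
  obtain ⟨b, hb⟩ :=
    Orthonormal.exists_orthonormalBasis_extension_of_card_eq (𝕜 := ℝ) (by simp) hon
  have hb2 : ∀ i, b 2 i = x i := by
    intro i; rw [hb 2 rfl]
  set R : M3R := Matrix.of (fun i k => b k i) with hR
  have hRt : Rᵀ * R = 1 := by
    ext k l
    have := b.orthonormal
    rw [orthonormal_iff_ite] at this
    have h := this k l
    simp only [PiLp.inner_apply, RCLike.inner_apply, starRingEnd_apply, star_trivial] at h
    simpa [Matrix.mul_apply, Matrix.one_apply, hR, mul_comm] using h
  have hRo : R * Rᵀ = 1 := mul_eq_one_comm.mp hRt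
  have hdet2 : R.det * R.det = 1 := by
    have : (Rᵀ * R).det = (1 : M3R).det := by rw [hRt]
    simpa [Matrix.det_mul, Matrix.det_transpose, mul_comm] using this
  set d := R.det with hd
  set N : M3R := !![d, 0, 0; 0, 1, 0; 0, 0, 1] with hN
  refine ⟨R * N, ⟨?_, ?_⟩, ?_⟩
  · have hNN : N * Nᵀ = 1 := by
      ext i j
      fin_cases i <;> fin_cases j <;>
        simp [hN, Matrix.mul_apply, Fin.sum_univ_three, Matrix.transpose_apply, hdet2,
          Matrix.vecHead, Matrix.vecTail]
    rw [Matrix.transpose_mul, mul_assoc, ← mul_assoc N, hNN, one_mul, hRo]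
  · rw [Matrix.det_mul]
    have : N.det = d := by simp [hN, Matrix.det_fin_three]
    rw [this, ← hd, hdet2]
  · intro i
    simp [Matrix.mul_apply, Fin.sum_univ_three, hN, hR, hb2]

lemma fval_mem (p : SOS) : fval p ∈ OrbA0 := by
  obtain ⟨⟨A, x⟩, hA, hx⟩ := p
  obtain ⟨R, hR, hRc⟩ := exists_so3_col2 x hx
  refine ⟨0, R, A, hR, hA, ?_⟩
  rw [toC_inv hA]
  have : Complex.exp ((0:ℝ) * Complex.I) = 1 := by simp
  rw [this, one_smul]
  ext i q
  simp [fval, gval, Matrix.vecMulVec_apply, Matrix.mul_apply, Fin.sum_univ_three,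
    toC, Matrix.map_apply, A0, Matrix.transpose_apply, Matrix.vecHead, Matrix.vecTail,
    ← hRc i]
  push_cast
  ring

lemma fval_sound {p p' : SOS} (h : z2Rel p p') : fval p = fval p' := by
  rcases h with h | h
  · simp [fval, h]
  · simp only [fval, h]
    ext i q
    simp [gval, Matrix.vecMulVec_apply, Matrix.mul_apply, Fin.sum_univ_three, Jtm,
      Matrix.vecHead, Matrix.vecTail]
    ring

lemma col_ne_zero {A : M3R} (hA : isSO3 A) :
    ∃ q, ((A q 0 : ℂ) + Complex.I * (A q 1 : ℂ)) ≠ 0 := by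
  have hAt : Aᵀ * A = 1 := hA.tmul
  have h00 : (Aᵀ * A) 0 0 = 1 := by rw [hAt]; simp [Matrix.one_apply]
  simp only [Matrix.mul_apply, Fin.sum_univ_three, Matrix.transpose_apply] at h00
  have : A 0 0 ≠ 0 ∨ A 1 0 ≠ 0 ∨ A 2 0 ≠ 0 := by
    by_contra hc
    push_neg at hc
    obtain ⟨h1, h2, h3⟩ := hc
    rw [h1, h2, h3] at h00
    norm_num at h00
  have key : ∀ q : Fin 3, A q 0 ≠ 0 → ((A q 0 : ℂ) + Complex.I * (A q 1 : ℂ)) ≠ 0 := by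
    intro q hq hz
    apply hq
    have := congrArg Complex.re hz
    simpa using this
  rcases this with h | h | h
  · exact ⟨0, key 0 h⟩
  · exact ⟨1, key 1 h⟩
  · exact ⟨2, key 2 h⟩

lemma sum_cast_mul (x y : Fin 3 → ℝ) (w : ℂ) :
    ∑ i, (y i : ℂ) * ((x i : ℂ) * w) = ((∑ i, x i * y i : ℝ) : ℂ) * w := by
  push_cast
  rw [Finset.sum_mul]
  exact Finset.sum_congr rfl (fun i _ => by ring)

lemma fval_inj {p p' : SOS} (h : fval p = fval p') : z2Rel p p' := by
  obtain ⟨⟨A, x⟩, hA, hx⟩ := p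
  obtain ⟨⟨A', x'⟩, hA', hx'⟩ := p'
  simp only [fval, gval] at h
  set v : Fin 3 → ℂ := fun q => (A q 0 : ℂ) + Complex.I * (A q 1 : ℂ) with hv
  set v' : Fin 3 → ℂ := fun q => (A' q 0 : ℂ) + Complex.I * (A' q 1 : ℂ) with hv'
  have hent : ∀ i q, (x i : ℂ) * v q = (x' i : ℂ) * v' q := by
    intro i q
    have := congrFun (congrFun h i) q
    simpa [Matrix.vecMulVec_apply] using this
  set c : ℝ := ∑ i, x i * x' i with hc
  have hxx : (∑ i, x i * x i) = 1 := hx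
  have hxx' : (∑ i, x' i * x' i) = 1 := hx'
  have hv'c : ∀ q, v' q = (c : ℂ) * v q := by
    intro q
    have h1 : ∑ i, (x' i : ℂ) * ((x i : ℂ) * v q) = ∑ i, (x' i : ℂ) * ((x' i : ℂ) * v' q) :=
      Finset.sum_congr rfl (fun i _ => by rw [hent i q])
    rw [sum_cast_mul x x' (v q), sum_cast_mul x' x' (v' q), hxx'] at h1
    rw [hc]
    simpa using h1.symm
  have hvc : ∀ q, v q = (c : ℂ) * v' q := by
    intro q
    have h1 : ∑ i, (x i : ℂ) * ((x i : ℂ) * v q) = ∑ i, (x i : ℂ) * ((x' i : ℂ) * v' q) :=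
      Finset.sum_congr rfl (fun i _ => by rw [hent i q])
    rw [sum_cast_mul x x (v q), sum_cast_mul x' x (v' q), hxx] at h1
    have hcomm : (∑ i, x' i * x i) = c := by
      rw [hc]; exact Finset.sum_congr rfl (fun i _ => mul_comm _ _)
    rw [hcomm] at h1
    simpa using h1
  obtain ⟨q₀, hq₀⟩ := col_ne_zero hA
  have hq₀' : v q₀ ≠ 0 := hq₀
  have hc2 : c * c = 1 := by
    have h1 : ((c : ℂ) * (c : ℂ)) * v q₀ = (1 : ℂ) * v q₀ := by
      rw [one_mul, mul_assoc, ← hv'c, ← hvc]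
    have h2 : ((c : ℂ) * (c : ℂ)) = 1 := mul_right_cancel₀ hq₀' h1
    exact_mod_cast h2
  have hcols : ∀ q, A' q 0 = c * A q 0 ∧ A' q 1 = c * A q 1 := by
    intro q
    have h1 := hv'c q
    simp only [hv, hv', Complex.ext_iff, Complex.add_re, Complex.add_im, Complex.mul_re,
      Complex.mul_im, Complex.ofReal_re, Complex.ofReal_im, Complex.I_re, Complex.I_im] at h1
    constructor
    · nlinarith [h1.1, h1.2]
    · nlinarith [h1.1, h1.2]
  have hxs : ∀ i, x' i = c * x i := by
    intro i
    have h1 : (x i : ℂ) * v q₀ = (x' i : ℂ) * ((c : ℂ) * v q₀) := by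
      rw [← hv'c]; exact hent i q₀
    have h2 : ((x i : ℝ) : ℂ) = ((x' i * c : ℝ) : ℂ) := by
      apply mul_right_cancel₀ hq₀'
      push_cast
      rw [h1]; ring
    have h3 : x i = x' i * c := by exact_mod_cast h2
    calc x' i = x' i * (c * c) := by rw [hc2, mul_one]
      _ = (x' i * c) * c := by ring
      _ = x i * c := by rw [← h3]
      _ = c * x i := mul_comm _ _
  have hArigid : A' = A * !![c, 0, 0; 0, c, 0; 0, 0, 1] :=
    so3_rigid hA hA' c hc2 (fun q => (hcols q).1) (fun q => (hcols q).2)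
  rcases mul_self_eq_one_iff.mp hc2 with hc1 | hcm1
  · left
    rw [hc1] at hArigid hxs
    refine Prod.ext ?_ ?_
    · simp only [hArigid, id3, mul_one]
    · funext i; simpa using hxs i
  · right
    rw [hcm1] at hArigid hxs
    refine Prod.ext ?_ ?_
    · simpa only [neg13] using hArigid
    · funext i
      simp only [Pi.neg_apply]
      rw [hxs i]; ring

lemma fval_surj (m : M3C) (hm : m ∈ OrbA0) : ∃ p : SOS, fval p = m := by
  obtain ⟨φ, R₁, R₂, h1, h2, hmeq⟩ := hm
  set Rot : M3R := !![Real.cos φ, Real.sin φ, 0; -Real.sin φ, Real.cos φ, 0; 0, 0, 1] with hRot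
  have hRotSO : isSO3 Rot := by
    constructor
    · ext i j
      fin_cases i <;> fin_cases j <;>
        simp [hRot, Matrix.mul_apply, Fin.sum_univ_three, Matrix.transpose_apply,
          Matrix.one_apply, Matrix.vecHead, Matrix.vecTail] <;>
        nlinarith [Real.sin_sq_add_cos_sq φ]
    · rw [hRot, Matrix.det_fin_three]
      simp [Matrix.vecHead, Matrix.vecTail]
      nlinarith [Real.sin_sq_add_cos_sq φ]
  set B : M3R := R₂ * Rot with hB
  set x : Fin 3 → ℝ := fun i => R₁ i 2 with hxdef
  have hxu : x ⬝ᵥ x = 1 := by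
    have ht := h1.tmul
    have h22 : (R₁ᵀ * R₁) 2 2 = 1 := by rw [ht]; simp [Matrix.one_apply]
    simpa [Matrix.mul_apply, Fin.sum_univ_three, dotProduct, hxdef] using h22
  refine ⟨⟨(B, x), ⟨h2.mul hRotSO, hxu⟩⟩, ?_⟩
  rw [hmeq, toC_inv h2]
  have hexp : Complex.exp (φ * Complex.I)
      = (Real.cos φ : ℂ) + (Real.sin φ : ℂ) * Complex.I := by
    rw [Complex.exp_mul_I, Complex.ofReal_cos, Complex.ofReal_sin]
  ext i q
  simp [fval, gval, Matrix.vecMulVec_apply, Matrix.mul_apply, Fin.sum_univ_three, toC, A0,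
    hexp, hRot, hB, hxdef, Matrix.transpose_apply, Matrix.vecHead, Matrix.vecTail]
  push_cast
  linear_combination (-((R₁ i 2 : ℂ) * (R₂ q 1 : ℂ) * Complex.sin (φ : ℂ))) * Complex.I_sq

def Fmap : Quot z2Rel → ↥OrbA0 :=
  Quot.lift (fun p => ⟨fval p, fval_mem p⟩)
    (fun _ _ hab => Subtype.ext (fval_sound hab))

/-- The map sending the `ℤ₂`-orbit of `(A, x)` to the matrix `x ⊗ (A₁ + i A₂)ᵀ`
(where `A₁, A₂` are the first two columns of `A`) is a well-defined bijection
`(SO(3) × S²)/ℤ₂ → Orb(A₀)`. -/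
theorem z2_quotient_bij_orbit_first_regime :
    ∃ F : Quot z2Rel ≃ ↥OrbA0,
      ∀ (p : SOS) (m : ↥OrbA0),
        (m : M3C) = Matrix.vecMulVec (fun i => (p.val.2 i : ℂ))
          (fun q => (p.val.1 q 0 : ℂ) + Complex.I * (p.val.1 q 1 : ℂ)) →
        F (Quot.mk z2Rel p) = m := by
  have hbij : Function.Bijective Fmap := by
    constructor
    · intro a b
      induction a using Quot.ind with | _ p => ?_
      induction b using Quot.ind with | _ p' => ?_
      intro hEq
      have hfe : fval p = fval p' := congrArg Subtype.val hEq
      exact Quot.sound (fval_inj hfe)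
    · rintro ⟨m, hm⟩
      obtain ⟨p, hp⟩ := fval_surj m hm
      exact ⟨Quot.mk _ p, Subtype.ext hp⟩
  refine ⟨Equiv.ofBijective Fmap hbij, ?_⟩
  intro p m hmv
  show Fmap (Quot.mk z2Rel p) = m
  exact (Subtype.ext (by rw [hmv]; rfl)).symm
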